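/- Let A be an n×n real orthogonal matrix and T ⊆ {1,…,n}. If ‖A_{JᶜT}‖ < 1 and h is a vector supported on T (i.e. h_{Tᶜ} = 0) with A_{JT} h_T = 0, then h = 0. -/

import Mathlib

open Matrix

/-- Spectral (ℓ²→ℓ² operator) norm of a real matrix. -/
noncomputable def specNorm {α β : Type*} [Fintype α] [Fintype β] [DecidableEq β]
    (B : Matrix α β ℝ) : ℝ :=
  ‖LinearMap.toContinuousLinearMap (Matrix.toEuclideanLin B)‖

/-- Euclidean (ℓ²) norm of a finitely indexed real vector. -/
noncomputable def l2 {α : Type*} [Fintype α] (v : α → ℝ) : ℝ := Real.sqrt (∑ i, v i ^ 2)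

/-- ℓ¹ norm of a finitely indexed real vector. -/
def l1 {α : Type*} [Fintype α] (v : α → ℝ) : ℝ := ∑ i, |v i|

/-- Submatrix of `A` with rows indexed by `J` and columns indexed by `T`. -/
def sub {n : ℕ} (A : Matrix (Fin n) (Fin n) ℝ) (J T : Finset (Fin n)) :
    Matrix J T ℝ := A.submatrix (fun i => (i : Fin n)) (fun j => (j : Fin n))

/-- Submatrix of `A` with rows indexed by `J` (all columns kept). -/
def rowSub {n : ℕ} (A : Matrix (Fin n) (Fin n) ℝ) (J : Finset (Fin n)) :
    Matrix J (Fin n) ℝ := A.submatrix (fun i => (i : Fin n)) id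

lemma mulVec_l2_le {α β : Type*} [Fintype α] [Fintype β] [DecidableEq β]
    (B : Matrix α β ℝ) (x : β → ℝ) :
    Real.sqrt (∑ i, (B.mulVec x i)^2) ≤ specNorm B * Real.sqrt (∑ j, (x j)^2) := by
  have := (LinearMap.toContinuousLinearMap (Matrix.toEuclideanLin B)).le_opNorm
    ((WithLp.equiv 2 (β → ℝ)).symm x)
  simp only [LinearMap.coe_toContinuousLinearMap', WithLp.equiv_symm_apply, Matrix.toEuclideanLin_apply_piLp_toLp] at this
  rw [EuclideanSpace.norm_eq, EuclideanSpace.norm_eq] at this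
  simpa [sq_abs, specNorm] using this

theorem stmt2 {n : ℕ} (A : Matrix (Fin n) (Fin n) ℝ)
    (hA : Aᵀ * A = 1) (J T : Finset (Fin n))
    (hnorm : specNorm (sub A Jᶜ T) < 1)
    (h : Fin n → ℝ) (hsupp : ∀ i, i ∉ T → h i = 0)
    (hker : (sub A J T).mulVec (fun j : T => h j) = 0) :
    h = 0 := by
  set v := A.mulVec h with hv
  -- generic row computation
  have hrow : ∀ i : Fin n, v i = ∑ t : T, A i t * h t := by
    intro i
    calc v i = ∑ t : Fin n, A i t * h t := rfl
      _ = ∑ t ∈ T, A i t * h t := (Finset.sum_subset (Finset.subset_univ T)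
            (fun x _ hx => by rw [hsupp x hx, mul_zero])).symm
      _ = ∑ t : T, A i (t : Fin n) * h t := (Finset.sum_coe_sort T _).symm
  -- norms preserved
  have hvh : ∑ i, v i ^ 2 = ∑ i, h i ^ 2 := by
    have h2 : v ⬝ᵥ v = h ⬝ᵥ h := by
      calc v ⬝ᵥ v = Aᵀ *ᵥ (A *ᵥ h) ⬝ᵥ h := by
              rw [hv, dotProduct_comm, dotProduct_mulVec, ← mulVec_transpose]
        _ = h ⬝ᵥ h := by rw [mulVec_mulVec, hA, one_mulVec]
    simpa [dotProduct, sq] using h2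
  -- rows in J vanish
  have hvJ : ∀ j ∈ J, v j = 0 := by
    intro j hj
    have := congrFun hker ⟨j, hj⟩
    simpa [mulVec, dotProduct, _root_.sub, Matrix.submatrix_apply, hrow j] using this
  have hsplit : ∑ i, h i ^ 2 = ∑ i ∈ Jᶜ, v i ^ 2 := by
    rw [← hvh, ← Finset.sum_add_sum_compl J]
    rw [Finset.sum_eq_zero (fun j hj => by rw [hvJ j hj]; ring), zero_add]
  -- rows in Jᶜ match submatrix mulVec
  have hJc : ∀ i : (Jᶜ : Finset (Fin n)),
      (sub A Jᶜ T).mulVec (fun j : T => h j) i = v i := by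
    intro i
    simp [mulVec, dotProduct, _root_.sub, Matrix.submatrix_apply, hrow i]
  have hsum2 : ∑ i ∈ Jᶜ, v i ^ 2
      = ∑ i : (Jᶜ : Finset (Fin n)), ((sub A Jᶜ T).mulVec (fun j : T => h j) i) ^ 2 := by
    rw [← Finset.sum_coe_sort (Jᶜ) (fun i => v i ^ 2)]
    exact Finset.sum_congr rfl (fun i _ => by rw [hJc])
  have hTsum : ∑ t : T, h t ^ 2 = ∑ i, h i ^ 2 := by
    rw [Finset.sum_coe_sort T (fun t => h t ^ 2)]
    exact Finset.sum_subset (Finset.subset_univ T)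
      (fun x _ hx => by rw [hsupp x hx]; ring)
  have hle := mulVec_l2_le (sub A Jᶜ T) (fun j : T => h j)
  rw [hTsum] at hle
  have hSnonneg : 0 ≤ ∑ i, h i ^ 2 := Finset.sum_nonneg (fun i _ => sq_nonneg _)
  have hkey : Real.sqrt (∑ i, h i ^ 2) ≤ specNorm (sub A Jᶜ T) * Real.sqrt (∑ i, h i ^ 2) := by
    calc Real.sqrt (∑ i, h i ^ 2) = Real.sqrt (∑ i : (Jᶜ : Finset (Fin n)),
          ((sub A Jᶜ T).mulVec (fun j : T => h j) i) ^ 2) := by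
            rw [hsplit, hsum2]
      _ ≤ _ := hle
  have hnn : 0 ≤ specNorm (sub A Jᶜ T) := norm_nonneg _
  have hsqrt0 : Real.sqrt (∑ i, h i ^ 2) = 0 := by
    nlinarith [Real.sqrt_nonneg (∑ i, h i ^ 2)]
  have hS0 : (∑ i, h i ^ 2) = 0 := Real.sqrt_eq_zero hSnonneg |>.mp hsqrt0
  funext i
  have := (Finset.sum_eq_zero_iff_of_nonneg (fun i _ => sq_nonneg (h i))).mp hS0 i (Finset.mem_univ i)
  exact pow_eq_zero_iff (by norm_num) |>.mp this
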